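/- Let Ω be a finite probability space, A0 a random action with P(A0 = a) = π(a) > 0 for all a ∈ A, and Z a real random variable with finitely many values such that h(a|z) = P(A0 = a | Z = z) > 0 for all z in the support of Z and all a. Then Σ_a π(a) · E[ Z · π(a)/h(a|Z) | A0 = a ] = E[Z] if and only if E[ Z · π(a)/h(a|Z) | A0 = a ] = E[Z] for each a individually; moreover the latter holds (Theorem 2), so both hold. -/

import Mathlib

open Finset
open scoped Classical

/-- Self-consistency of return-conditional hindsight value estimates
(Statement 15): with `π a = P(A₀ = a) > 0` for all `a` and
`h a z = P(A₀ = a | Z = z) > 0` on the support of `Z`,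
`Σ_a π(a) · E[ Z · π(a)/h(a|Z) | A₀ = a ] = E[Z]` if and only if
`E[ Z · π(a)/h(a|Z) | A₀ = a ] = E[Z]` for each `a`; moreover the latter
holds (Theorem 2), so both hold. -/
theorem stmt_15 {Ω A : Type*} [Fintype Ω] [Fintype A]
    (p : Ω → ℝ) (hp : ∀ ω, 0 ≤ p ω) (hsum : ∑ ω, p ω = 1)
    (A0 : Ω → A) (Z : Ω → ℝ) (π : A → ℝ)
    (hπ : ∀ a, π a = ∑ ω ∈ univ.filter (fun ω' => A0 ω' = a), p ω)
    (hπpos : ∀ a, 0 < π a)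
    (h : A → ℝ → ℝ)
    (hdef : ∀ a z, 0 < ∑ ω ∈ univ.filter (fun ω' => Z ω' = z), p ω →
      h a z = (∑ ω ∈ univ.filter (fun ω' => A0 ω' = a ∧ Z ω' = z), p ω) /
              (∑ ω ∈ univ.filter (fun ω' => Z ω' = z), p ω))
    (hpos : ∀ a z, 0 < ∑ ω ∈ univ.filter (fun ω' => Z ω' = z), p ω → 0 < h a z) :
    ((∑ a, π a *
        ((∑ ω ∈ univ.filter (fun ω' => A0 ω' = a),
            p ω * (Z ω * π a / h a (Z ω))) / π a)
        = ∑ ω, p ω * Z ω)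
      ↔ (∀ a, (∑ ω ∈ univ.filter (fun ω' => A0 ω' = a),
            p ω * (Z ω * π a / h a (Z ω))) / π a = ∑ ω, p ω * Z ω)) ∧
    (∀ a, (∑ ω ∈ univ.filter (fun ω' => A0 ω' = a),
        p ω * (Z ω * π a / h a (Z ω))) / π a = ∑ ω, p ω * Z ω) := by
  -- abbreviations
  set S : ℝ → ℝ := fun z => ∑ ω ∈ univ.filter (fun ω' => Z ω' = z), p ω with hS
  set T : A → ℝ → ℝ :=
    fun a z => ∑ ω ∈ univ.filter (fun ω' => A0 ω' = a ∧ Z ω' = z), p ω with hT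
  have hSnonneg : ∀ z, 0 ≤ S z := fun z => Finset.sum_nonneg fun ω _ => hp ω
  -- key lemma
  have key : ∀ a, (∑ ω ∈ univ.filter (fun ω' => A0 ω' = a),
      p ω * (Z ω * π a / h a (Z ω))) = π a * ∑ ω, p ω * Z ω := by
    intro a
    -- fiber the LHS over values of Z
    have hl : (∑ ω ∈ univ.filter (fun ω' => A0 ω' = a),
        p ω * (Z ω * π a / h a (Z ω)))
        = ∑ z ∈ univ.image Z, T a z * (z * π a / h a z) := by
      rw [← Finset.sum_fiberwise_of_maps_to
        (g := Z) (t := univ.image Z)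
        (fun ω _ => Finset.mem_image_of_mem Z (Finset.mem_univ ω))]
      refine Finset.sum_congr rfl fun z _ => ?_
      have : ((univ.filter (fun ω' => A0 ω' = a)).filter (fun ω' => Z ω' = z))
          = univ.filter (fun ω' => A0 ω' = a ∧ Z ω' = z) := by
        ext ω; simp [Finset.mem_filter, and_assoc]
      rw [this, hT, Finset.sum_mul]
      refine Finset.sum_congr rfl fun ω hω => ?_
      have hz : Z ω = z := (Finset.mem_filter.mp hω).2.2
      rw [hz]
    have hr : (∑ ω, p ω * Z ω) = ∑ z ∈ univ.image Z, S z * z := by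
      rw [← Finset.sum_fiberwise_of_maps_to
        (g := Z) (t := univ.image Z)
        (fun ω _ => Finset.mem_image_of_mem Z (Finset.mem_univ ω))]
      refine Finset.sum_congr rfl fun z _ => ?_
      rw [hS, Finset.sum_mul]
      refine Finset.sum_congr rfl fun ω hω => ?_
      have hz : Z ω = z := by simpa using (Finset.mem_filter.mp hω).2
      rw [hz]
    rw [hl, hr, Finset.mul_sum]
    refine Finset.sum_congr rfl fun z _ => ?_
    by_cases hSz : 0 < S z
    · have hhz : h a z = T a z / S z := hdef a z hSz
      have hSne : S z ≠ 0 := ne_of_gt hSz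
      have hhne : h a z ≠ 0 := ne_of_gt (hpos a z hSz)
      have hT' : T a z = h a z * S z := by rw [hhz]; field_simp
      rw [hT']
      field_simp
    · have hSz0 : S z = 0 := le_antisymm (not_lt.mp hSz) (hSnonneg z)
      have hT0 : T a z = 0 := by
        rw [hT]
        refine Finset.sum_eq_zero fun ω hω => ?_
        have hω' : ω ∈ univ.filter (fun ω' => Z ω' = z) := by
          simp only [Finset.mem_filter] at hω ⊢
          exact ⟨hω.1, hω.2.2⟩
        have := (Finset.sum_eq_zero_iff_of_nonneg
          (fun ω _ => hp ω)).mp hSz0 ω hω'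
        exact this
      rw [hT0, hSz0]; ring
  have hπne : ∀ a, π a ≠ 0 := fun a => ne_of_gt (hπpos a)
  have each : ∀ a, (∑ ω ∈ univ.filter (fun ω' => A0 ω' = a),
      p ω * (Z ω * π a / h a (Z ω))) / π a = ∑ ω, p ω * Z ω := by
    intro a
    rw [key a, mul_comm (π a), mul_div_assoc, div_self (hπne a), mul_one]
  refine ⟨⟨fun _ => each, fun _ => ?_⟩, each⟩
  have hπsum : ∑ a, π a = 1 := by
    calc ∑ a, π a = ∑ a, ∑ ω ∈ univ.filter (fun ω' => A0 ω' = a), p ω := by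
          exact Finset.sum_congr rfl fun a _ => hπ a
      _ = ∑ ω, p ω := Finset.sum_fiberwise_of_maps_to
          (fun ω _ => Finset.mem_univ (A0 ω)) p
      _ = 1 := hsum
  calc ∑ a, π a * ((∑ ω ∈ univ.filter (fun ω' => A0 ω' = a),
        p ω * (Z ω * π a / h a (Z ω))) / π a)
      = ∑ a, π a * (∑ ω, p ω * Z ω) := by
        exact Finset.sum_congr rfl fun a _ => by rw [each a]
    _ = (∑ a, π a) * (∑ ω, p ω * Z ω) := by rw [Finset.sum_mul]
    _ = ∑ ω, p ω * Z ω := by rw [hπsum, one_mul]
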